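/- Let H00 be a p×p complex matrix, H11 a q×q complex matrix, let x0 : Fin p and x1 : Fin q, and let σ be a complex number. Let H01 be the p×q matrix whose (x0, x1) entry is 1 and all other entries 0, and let H10 = H01ᵀ. Then charpoly(H↑σ) = charpoly(H00) · charpoly(H11) − σ² · C(σ²)⁰ · charpoly(H00′) · charpoly(H11′), where H00′ is the (p−1)×(p−1) matrix obtained from H00 by deleting row and column x0 (i.e., the submatrix of H00 indexed by {i : Fin p // i ≠ x0}), and H11′ is obtained from H11 by deleting row and column x1. (Here σ² multiplies the polynomial as the constant polynomial.) -/

import Mathlib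

open Matrix Polynomial

lemma myUpdateRow_comm {R m n : Type*} [DecidableEq m] (M : Matrix m n R) {a b : m}
    (h : a ≠ b) (u v : n → R) :
    (M.updateRow a u).updateRow b v = (M.updateRow b v).updateRow a u := by
  ext i j
  by_cases hib : i = b <;> by_cases hia : i = a <;>
    simp_all [Matrix.updateRow_apply]

lemma myDet_updateRow_single {R n : Type*} [CommRing R] [Fintype n] [DecidableEq n]
    (A : Matrix n n R) (i : n) :
    (A.updateRow i (Pi.single i 1)).det =
      (A.submatrix (fun j : {j : n // j ≠ i} => (j : n))
        (fun j : {j : n // j ≠ i} => (j : n))).det := by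
  haveI : Unique {j : n // ¬ j ≠ i} := ⟨⟨⟨i, by simp⟩⟩, fun x => Subtype.ext (not_not.mp x.2)⟩
  let e : {j : n // j ≠ i} ⊕ {j : n // ¬ j ≠ i} ≃ n := Equiv.sumCompl _
  rw [← det_submatrix_equiv_self e]
  have he : (A.updateRow i (Pi.single i 1)).submatrix e e =
      fromBlocks
        (A.submatrix (fun j : {j : n // j ≠ i} => (j : n)) (fun j : {j : n // j ≠ i} => (j : n)))
        (A.submatrix (fun j : {j : n // j ≠ i} => (j : n)) (fun j : {j : n // ¬ j ≠ i} => (j : n)))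
        0 1 := by
    ext jk kl
    rcases jk with ⟨j, hj⟩ | ⟨j, hj⟩ <;> rcases kl with ⟨k, hk⟩ | ⟨k, hk⟩
    · simp [e, Matrix.updateRow_ne hj]
    · simp [e, Matrix.updateRow_ne hj]
    · obtain rfl := not_not.mp hj
      simp [e, Pi.single_apply, hk]
    · obtain rfl := not_not.mp hj
      obtain rfl := not_not.mp hk
      simp [e, Pi.single_apply, Matrix.one_apply]
  rw [he, det_fromBlocks_zero₂₁, det_one, mul_one]

lemma myCharmatrix_submatrix {R m n : Type*} [CommRing R] [Fintype m] [DecidableEq m]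
    [Fintype n] [DecidableEq n] (A : Matrix n n R) (f : m → n) (hf : Function.Injective f) :
    charmatrix (A.submatrix f f) = (charmatrix A).submatrix f f := by
  refine Matrix.ext fun i j => ?_
  by_cases h : i = j
  · subst h; simp [charmatrix_apply_eq]
  · simp [charmatrix_apply_ne _ _ _ h, charmatrix_apply_ne _ _ _ (fun hc => h (hf hc))]


theorem stmt7 (p q : ℕ)
    (H00 : Matrix (Fin p) (Fin p) ℂ) (H11 : Matrix (Fin q) (Fin q) ℂ)
    (x0 : Fin p) (x1 : Fin q) (σ : ℂ)
    (H01 : Matrix (Fin p) (Fin q) ℂ)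
    (hH01 : H01 = Matrix.single x0 x1 (1 : ℂ))
    (H10 : Matrix (Fin q) (Fin p) ℂ) (hH10 : H10 = H01ᵀ) :
    (Matrix.fromBlocks H00 (σ • H01) (σ • H10) H11).charpoly =
      H00.charpoly * H11.charpoly -
        C (σ ^ 2) *
          ((H00.submatrix (fun i : {i : Fin p // i ≠ x0} => (i : Fin p))
              (fun i : {i : Fin p // i ≠ x0} => (i : Fin p))).charpoly *
            (H11.submatrix (fun i : {i : Fin q // i ≠ x1} => (i : Fin q))
              (fun i : {i : Fin q // i ≠ x1} => (i : Fin q))).charpoly) := by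
  subst hH10 hH01
  let s : ℂ[X] := C σ
  let cp : Matrix (Fin p) (Fin p) ℂ[X] := charmatrix H00
  let cq : Matrix (Fin q) (Fin q) ℂ[X] := charmatrix H11
  let N : Matrix (Fin p ⊕ Fin q) (Fin p ⊕ Fin q) ℂ[X] := fromBlocks cp 0 0 cq
  let a : Fin p ⊕ Fin q := Sum.inl x0
  let b : Fin p ⊕ Fin q := Sum.inr x1
  let u1 : Fin p ⊕ Fin q → ℂ[X] := Pi.single a 1
  let u2 : Fin p ⊕ Fin q → ℂ[X] := Pi.single b 1
  have hab : a ≠ b := by simp [a, b]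
  -- Step 1 : identify the charmatrix of the block matrix as a double row update of N
  have key : charmatrix (fromBlocks H00 (σ • Matrix.single x0 x1 (1 : ℂ))
        (σ • (Matrix.single x0 x1 (1 : ℂ))ᵀ) H11)
      = (N.updateRow a (N a + (-s) • u2)).updateRow b (N b + (-s) • u1) := by
    rw [charmatrix_fromBlocks]
    refine Matrix.ext fun ij kl => ?_
    rcases ij with i | i <;> rcases kl with j | j
    · rcases eq_or_ne i x0 with rfl | hi
      · simp [N, cp, a, b, u1, u2, Matrix.updateRow_apply, Pi.single_apply]
      · simp [N, cp, a, b, u1, u2, Matrix.updateRow_apply, Pi.single_apply, hi]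
    · rcases eq_or_ne i x0 with rfl | hi
      · rcases eq_or_ne j x1 with rfl | hj
        · simp [N, a, b, u1, u2, s, Matrix.updateRow_apply, Pi.single_apply, Matrix.single]
        · simp [N, a, b, u1, u2, s, Matrix.updateRow_apply, Pi.single_apply, Matrix.single,
            hj, Ne.symm hj]
      · rcases eq_or_ne j x1 with rfl | hj
        · simp [N, a, b, u1, u2, s, Matrix.updateRow_apply, Pi.single_apply, Matrix.single,
            hi, Ne.symm hi]
        · simp [N, a, b, u1, u2, s, Matrix.updateRow_apply, Pi.single_apply, Matrix.single,
            hi, Ne.symm hi, hj, Ne.symm hj]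
    · rcases eq_or_ne i x1 with rfl | hi
      · rcases eq_or_ne j x0 with rfl | hj
        · simp [N, a, b, u1, u2, s, Matrix.updateRow_apply, Pi.single_apply, Matrix.single]
        · simp [N, a, b, u1, u2, s, Matrix.updateRow_apply, Pi.single_apply, Matrix.single,
            hj, Ne.symm hj]
      · rcases eq_or_ne j x0 with rfl | hj
        · simp [N, a, b, u1, u2, s, Matrix.updateRow_apply, Pi.single_apply, Matrix.single,
            hi, Ne.symm hi]
        · simp [N, a, b, u1, u2, s, Matrix.updateRow_apply, Pi.single_apply, Matrix.single,
            hi, Ne.symm hi, hj, Ne.symm hj]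
    · rcases eq_or_ne i x1 with rfl | hi
      · simp [N, cq, a, b, u1, u2, Matrix.updateRow_apply, Pi.single_apply]
      · simp [N, cq, a, b, u1, u2, Matrix.updateRow_apply, Pi.single_apply, hi]
  -- zero determinant no. 1
  have z1 : (N.updateRow a u2).det = 0 := by
    have h1 : N.updateRow a u2 =
        fromBlocks (cp.updateRow x0 0)
          ((0 : Matrix (Fin p) (Fin q) ℂ[X]).updateRow x0 (Pi.single x1 1)) 0 cq := by
      refine Matrix.ext fun ij kl => ?_
      rcases ij with i | i <;> rcases kl with j | j
      · rcases eq_or_ne i x0 with rfl | hi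
        · simp [N, a, b, u2, Matrix.updateRow_apply, Pi.single_apply]
        · simp [N, a, b, u2, Matrix.updateRow_apply, Pi.single_apply, hi]
      · rcases eq_or_ne i x0 with rfl | hi
        · simp [N, a, b, u2, Matrix.updateRow_apply, Pi.single_apply]
        · simp [N, a, b, u2, Matrix.updateRow_apply, Pi.single_apply, hi]
      · simp [N, a, b, u2, Matrix.updateRow_apply, Pi.single_apply]
      · simp [N, a, b, u2, Matrix.updateRow_apply, Pi.single_apply]
    rw [h1, det_fromBlocks_zero₂₁]
    exact mul_eq_zero_of_left (det_eq_zero_of_row_eq_zero x0 (by simp)) _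
  -- zero determinant no. 2
  have z2 : (N.updateRow b u1).det = 0 := by
    have h2 : N.updateRow b u1 =
        fromBlocks cp 0
          ((0 : Matrix (Fin q) (Fin p) ℂ[X]).updateRow x1 (Pi.single x0 1))
          (cq.updateRow x1 0) := by
      refine Matrix.ext fun ij kl => ?_
      rcases ij with i | i <;> rcases kl with j | j
      · simp [N, a, b, u1, Matrix.updateRow_apply, Pi.single_apply]
      · simp [N, a, b, u1, Matrix.updateRow_apply, Pi.single_apply]
      · rcases eq_or_ne i x1 with rfl | hi
        · simp [N, a, b, u1, Matrix.updateRow_apply, Pi.single_apply]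
        · simp [N, a, b, u1, Matrix.updateRow_apply, Pi.single_apply, hi]
      · rcases eq_or_ne i x1 with rfl | hi
        · simp [N, a, b, u1, Matrix.updateRow_apply, Pi.single_apply]
        · simp [N, a, b, u1, Matrix.updateRow_apply, Pi.single_apply, hi]
    rw [h2, det_fromBlocks_zero₁₂]
    exact mul_eq_zero_of_right _ (det_eq_zero_of_row_eq_zero x1 (by simp))
  -- the double single-row update determinant
  have z3 : ((N.updateRow b u1).updateRow a u2).det
      = -((cp.updateRow x0 (Pi.single x0 1)).det * (cq.updateRow x1 (Pi.single x1 1)).det) := by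
    set S := (N.updateRow a u1).updateRow b u2 with hS
    have hR : (N.updateRow b u1).updateRow a u2 = S.submatrix (Equiv.swap a b) id := by
      refine Matrix.ext fun i j => ?_
      rcases eq_or_ne i a with rfl | hia
      · simp [hS, Equiv.swap_apply_left, Matrix.updateRow_apply, hab, hab.symm]
      · rcases eq_or_ne i b with rfl | hib
        · simp [hS, Equiv.swap_apply_right, Matrix.updateRow_apply, hab, hab.symm]
        · simp [hS, Equiv.swap_apply_of_ne_of_ne hia hib, Matrix.updateRow_apply, hia, hib]
    have hSblocks : S = fromBlocks (cp.updateRow x0 (Pi.single x0 1)) 0 0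
        (cq.updateRow x1 (Pi.single x1 1)) := by
      refine Matrix.ext fun ij kl => ?_
      rcases ij with i | i <;> rcases kl with j | j
      · rcases eq_or_ne i x0 with rfl | hi
        · simp [hS, N, a, b, u1, u2, Matrix.updateRow_apply, Pi.single_apply]
        · simp [hS, N, a, b, u1, u2, Matrix.updateRow_apply, Pi.single_apply, hi]
      · rcases eq_or_ne i x0 with rfl | hi
        · simp [hS, N, a, b, u1, u2, Matrix.updateRow_apply, Pi.single_apply]
        · simp [hS, N, a, b, u1, u2, Matrix.updateRow_apply, Pi.single_apply, hi]
      · rcases eq_or_ne i x1 with rfl | hi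
        · simp [hS, N, a, b, u1, u2, Matrix.updateRow_apply, Pi.single_apply]
        · simp [hS, N, a, b, u1, u2, Matrix.updateRow_apply, Pi.single_apply, hi]
      · rcases eq_or_ne i x1 with rfl | hi
        · simp [hS, N, a, b, u1, u2, Matrix.updateRow_apply, Pi.single_apply]
        · simp [hS, N, a, b, u1, u2, Matrix.updateRow_apply, Pi.single_apply, hi]
    rw [hR, det_permute, Equiv.Perm.sign_swap hab, hSblocks, det_fromBlocks_zero₂₁]
    simp
  -- now compute
  have main : (fromBlocks H00 (σ • Matrix.single x0 x1 (1 : ℂ))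
        (σ • (Matrix.single x0 x1 (1 : ℂ))ᵀ) H11).charpoly
      = N.det - s ^ 2 * ((cp.updateRow x0 (Pi.single x0 1)).det *
          (cq.updateRow x1 (Pi.single x1 1)).det) := by
    show (charmatrix _).det = _
    rw [key]
    set N1 := N.updateRow a (N a + (-s) • u2) with hN1
    rw [det_updateRow_add, det_updateRow_smul]
    have hN1b : N1 b = N b := Matrix.updateRow_ne hab.symm
    rw [← hN1b, Matrix.updateRow_eq_self]
    have hdN1 : N1.det = N.det := by
      rw [hN1, det_updateRow_add, det_updateRow_smul, Matrix.updateRow_eq_self, z1, mul_zero,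
        add_zero]
    have hT2 : (N1.updateRow b u1).det
        = -s * -((cp.updateRow x0 (Pi.single x0 1)).det *
            (cq.updateRow x1 (Pi.single x1 1)).det) := by
      rw [hN1, myUpdateRow_comm N hab, det_updateRow_add, det_updateRow_smul]
      have hN2a : (N.updateRow b u1) a = N a := Matrix.updateRow_ne hab
      rw [← hN2a, Matrix.updateRow_eq_self, z2, z3, zero_add]
    rw [hdN1, hT2]
    ring
  rw [main]
  have hdN : N.det = H00.charpoly * H11.charpoly := by
    show (fromBlocks cp 0 0 cq).det = _
    rw [det_fromBlocks_zero₂₁]; rfl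
  have hp : (cp.updateRow x0 (Pi.single x0 1)).det
      = (H00.submatrix (fun i : {i : Fin p // i ≠ x0} => (i : Fin p))
          (fun i : {i : Fin p // i ≠ x0} => (i : Fin p))).charpoly := by
    rw [myDet_updateRow_single]
    show _ = (charmatrix _).det
    rw [myCharmatrix_submatrix _ _ Subtype.coe_injective]
  have hq : (cq.updateRow x1 (Pi.single x1 1)).det
      = (H11.submatrix (fun i : {i : Fin q // i ≠ x1} => (i : Fin q))
          (fun i : {i : Fin q // i ≠ x1} => (i : Fin q))).charpoly := by
    rw [myDet_updateRow_single]
    show _ = (charmatrix _).det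
    rw [myCharmatrix_submatrix _ _ Subtype.coe_injective]
  rw [hdN, hp, hq, show s = C σ from rfl, ← map_pow]
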